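/- The vertical Darboux motion C(t) = (cε + k)t³ + (1 + ε(b − ck))t² + (k − εbk)t + 1 (the case a = 0 of the Darboux motion) intersects the exceptional generator [εH] precisely where its primal part (k t³ + t² + k t + 1) vanishes, namely at t = ±i, and at these parameter values the points [C(±i)] lie on the quadric Y, i.e., the dual parts d = C(±i)/ε satisfy d·conj(d) = 0. -/

import Mathlib

open Quaternion TrivSqZeroExt

/-- The complexified dual quaternions. -/
noncomputable abbrev DHC := DualNumber (Quaternion ℂ)

/-- The quaternion unit `k` in the complexified quaternions. -/
noncomputable def qk : Quaternion ℂ := ⟨0, 0, 0, 1⟩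

/-- The vertical Darboux motion
`C(t) = (cε + k)t³ + (1 + ε(b - ck))t² + (k - εbk)t + 1`. -/
noncomputable def darboux (b c : ℝ) (t : ℂ) : DHC :=
  t ^ 3 • ((c : ℂ) • DualNumber.eps + inl qk) +
    t ^ 2 • (1 + DualNumber.eps * inl ((b : ℂ) • 1 - (c : ℂ) • qk)) +
    t • (inl qk - DualNumber.eps * inl ((b : ℂ) • qk)) + 1

lemma darboux_fst (b c : ℝ) (t : ℂ) :
    (darboux b c t).fst = ⟨t ^ 2 + 1, 0, 0, t ^ 3 + t⟩ := by
  simp only [darboux, DualNumber.eps, fst_add, fst_smul, fst_mul, fst_inl, fst_inr, fst_one,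
    fst_sub, smul_zero, zero_add, mul_zero, zero_mul, add_zero, snd_inr, smul_add]
  ext <;> simp [Quaternion.re_smul, Quaternion.imI_smul, Quaternion.imJ_smul, Quaternion.imK_smul] <;> simp [qk, Quaternion.ext_iff]

lemma darboux_snd (b c : ℝ) (t : ℂ) :
    (darboux b c t).snd = ⟨c * t ^ 3 + b * t ^ 2, 0, 0, -(c * t ^ 2 + b * t)⟩ := by
  simp only [darboux, DualNumber.eps, snd_add, snd_smul, snd_mul, snd_inl, snd_inr, snd_one,
    fst_add, fst_smul, fst_mul, fst_inl, fst_inr, fst_one, fst_sub, snd_sub,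
    smul_zero, zero_add, mul_zero, zero_mul, add_zero, one_mul, mul_one, smul_add, smul_sub,
    sub_zero, op_smul_eq_mul]
  ext <;> simp [Quaternion.re_smul, Quaternion.imI_smul, Quaternion.imJ_smul, Quaternion.imK_smul] <;> simp [qk, Quaternion.ext_iff] <;> ring

/-- The vertical Darboux motion meets the exceptional generator `[εH]` (where
the primal part vanishes) exactly at `t = ±i`, and at these parameter values
the dual part `d` satisfies `d ⬝ conj d = 0`, i.e. the points lie on the
quadric `Y`. -/
theorem darboux_meets_Y (b c : ℝ) :
    (∀ t : ℂ, (darboux b c t).fst = 0 ↔ (t = Complex.I ∨ t = -Complex.I)) ∧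
    (∀ t : ℂ, (t = Complex.I ∨ t = -Complex.I) →
      (darboux b c t).snd * star (darboux b c t).snd = 0) := by
  constructor
  · intro t
    rw [darboux_fst]
    constructor
    · intro h
      have h1 : t ^ 2 + 1 = 0 := by
        have := congrArg QuaternionAlgebra.re h; simpa using this
      have h2 : (t - Complex.I) * (t + Complex.I) = 0 := by
        rw [← h1]; ring_nf; rw [Complex.I_sq]; ring
      rcases mul_eq_zero.1 h2 with h | h
      · exact Or.inl (by linear_combination h)
      · exact Or.inr (by linear_combination h)
    · rintro (rfl | rfl) <;>
        · ext <;> simp [Quaternion.ext_iff, pow_succ, Complex.I_sq]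

  · intro t ht
    have h1 : t ^ 2 + 1 = 0 := by
      rcases ht with rfl | rfl <;> simp [Complex.I_sq]
    rw [darboux_snd]
    have key : (⟨c * t ^ 3 + b * t ^ 2, 0, 0, -(c * t ^ 2 + b * t)⟩ : Quaternion ℂ) *
        star (⟨c * t ^ 3 + b * t ^ 2, 0, 0, -(c * t ^ 2 + b * t)⟩ : Quaternion ℂ) =
        ⟨(t ^ 2 + 1) * (c * t ^ 2 + b * t) ^ 2, 0, 0, 0⟩ := by
      ext <;> simp [Quaternion.ext_iff, Quaternion.re_mul, Quaternion.imI_mul,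
        Quaternion.imJ_mul, Quaternion.imK_mul] <;> ring
    refine key.trans ?_; rw [h1]
    simp [Quaternion.ext_iff]; rfl
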